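/- Let \ell_1,...,\ell_N be i.i.d. samples, each uniform over the nontrivial eigenvalues \lambda_2,...,\lambda_n of the Laplacian L of a random graph \hat{G} \in G(G,p), and let \ell_{1:N} = min_j \ell_j. Then E[\ell_{1:N}] \leq E[\lambda_2] (1 - ((n-2)/(n-1))^{N-1}) + (2mp/(n-2)) ((n-2)/(n-1))^N. -/

import Mathlib

open MeasureTheory ProbabilityTheory Finset SimpleGraph
attribute [local instance] Classical.propDecidable

/-- The eigenvalues of a real symmetric matrix, sorted in increasing order. -/
noncomputable def sortedEigs {n : ℕ} (A : Matrix (Fin n) (Fin n) ℝ) : List ℝ :=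
  if hA : A.IsHermitian then
    Multiset.sort (Multiset.ofList (List.ofFn hA.eigenvalues)) (· ≤ ·)
  else []

/-- `eig A i` is the `i`-th smallest eigenvalue `λ_i(A)` (1-indexed). -/
noncomputable def eig {n : ℕ} (A : Matrix (Fin n) (Fin n) ℝ) (i : ℕ) : ℝ :=
  (sortedEigs A).getD (i - 1) 0

private lemma sum_range_getD (l : List ℝ) : ∀ m : ℕ, l.length ≤ m →
    ∑ k ∈ Finset.range m, l.getD k 0 = l.sum := by
  induction l with
  | nil => intro m _; simp
  | cons a t ih =>
    intro m hm
    simp only [List.length_cons] at hm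
    obtain ⟨m', rfl⟩ : ∃ m', m = m' + 1 := ⟨m - 1, by omega⟩
    rw [Finset.sum_range_succ']
    simp only [List.getD_cons_succ, List.getD_cons_zero]
    rw [ih m' (by omega), List.sum_cons, add_comm]

private lemma trace_eq_sum_eigs {n : ℕ} {A : Matrix (Fin n) (Fin n) ℝ} (hA : A.IsHermitian) :
    A.trace = ∑ i, hA.eigenvalues i := by
  simpa using hA.trace_eq_sum_eigenvalues

section eigfacts
variable {n : ℕ} {A : Matrix (Fin n) (Fin n) ℝ}

private lemma sortedEigs_coe (hA : A.IsHermitian) :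
    (↑(sortedEigs A) : Multiset ℝ) = ↑(List.ofFn hA.eigenvalues) := by
  rw [sortedEigs, dif_pos hA, Multiset.sort_eq]

private lemma sortedEigs_length (hA : A.IsHermitian) : (sortedEigs A).length = n := by
  have := congrArg Multiset.card (sortedEigs_coe hA)
  simpa using this

private lemma sortedEigs_sorted : (sortedEigs A).Pairwise (· ≤ ·) := by
  rw [sortedEigs]
  split
  · exact Multiset.pairwise_sort ..
  · simp

private lemma sortedEigs_nonneg (hA : A.PosSemidef) : ∀ x ∈ sortedEigs A, 0 ≤ x := by
  intro x hx
  have hx' : x ∈ (↑(sortedEigs A) : Multiset ℝ) := by simpa using hx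
  rw [sortedEigs_coe hA.1] at hx'
  simp only [Multiset.mem_coe, List.mem_ofFn, Set.mem_range] at hx'
  obtain ⟨i, rfl⟩ := hx'
  exact hA.eigenvalues_nonneg i

private lemma sortedEigs_sum (hA : A.IsHermitian) : (sortedEigs A).sum = A.trace := by
  have h := congrArg Multiset.sum (sortedEigs_coe hA)
  simp only [Multiset.sum_coe] at h
  rw [h, List.sum_ofFn, trace_eq_sum_eigs hA]

private lemma eig_nonneg (hA : A.PosSemidef) (i : ℕ) : 0 ≤ eig A i := by
  rw [eig]
  rcases lt_or_ge (i - 1) (sortedEigs A).length with h | h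
  · rw [List.getD_eq_getElem (hn := h)]
    exact sortedEigs_nonneg hA _ (List.getElem_mem _)
  · rw [List.getD_eq_default (hn := h)]

private lemma sum_eig_le (hA : A.PosSemidef) (hn : 3 ≤ n) :
    ∑ k : Fin (n - 1), eig A ((k : ℕ) + 2) ≤ A.trace := by
  have hlen := sortedEigs_length hA.1
  have hsum := sortedEigs_sum hA.1
  have h0 : 0 ≤ (sortedEigs A).getD 0 0 := by
    rw [List.getD_eq_getElem (hn := by omega)]
    exact sortedEigs_nonneg hA _ (List.getElem_mem _)
  have key : ∑ k : Fin (n - 1), eig A ((k : ℕ) + 2)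
      = ∑ k ∈ Finset.range (n - 1), (sortedEigs A).getD (k + 1) 0 := by
    rw [Fin.sum_univ_eq_sum_range (fun k => eig A (k + 2)) (n - 1)]
    refine Finset.sum_congr rfl fun k _ => ?_
    simp [eig]
  have hr : ∑ k ∈ Finset.range ((n - 1) + 1), (sortedEigs A).getD k 0 = (sortedEigs A).sum :=
    sum_range_getD _ _ (by omega)
  rw [Finset.sum_range_succ'] at hr
  rw [key, ← hsum]
  linarith [hr]

end eigfacts

private lemma lap_trace {n : ℕ} (H' : SimpleGraph (Fin n)) :
    (H'.lapMatrix ℝ).trace = 2 * (H'.edgeFinset.card : ℝ) := by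
  classical
  rw [Matrix.trace]
  have h : ∀ i, (H'.lapMatrix ℝ).diag i = (H'.degree i : ℝ) := by
    intro i
    simp [Matrix.diag, SimpleGraph.lapMatrix, SimpleGraph.degMatrix]
  rw [Finset.sum_congr rfl fun i _ => h i, ← Nat.cast_sum,
    SimpleGraph.sum_degrees_eq_twice_card_edges]
  push_cast
  ring

private lemma count_nozero {K M : ℕ} [NeZero K] :
    (Finset.univ.filter (fun g : Fin M → Fin K => ∀ i, g i ≠ 0)).card = (K - 1) ^ M := by
  classical
  have h : (Finset.univ.filter (fun g : Fin M → Fin K => ∀ i, g i ≠ 0))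
      = Fintype.piFinset (fun _ : Fin M => Finset.univ.filter (· ≠ (0 : Fin K))) := by
    ext g; simp
  rw [h, Fintype.card_piFinset]
  have h2 : (Finset.univ.filter (· ≠ (0 : Fin K))).card = K - 1 := by
    rw [Finset.filter_ne', Finset.card_erase_of_mem (Finset.mem_univ _)]
    simp
  simp [h2]

private lemma sum_min_bound {K M : ℕ} [NeZero K] (lam : ℕ → ℝ) :
    ∑ f : Fin (M + 1) → Fin K, ⨅ j, lam ((f j : ℕ) + 2)
      ≤ (((K : ℝ)) ^ M - ((K : ℝ) - 1) ^ M) * ((K : ℝ) * lam 2)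
        + ((K : ℝ) - 1) ^ M * ∑ a : Fin K, lam ((a : ℕ) + 2) := by
  classical
  have key : ∑ f : Fin (M + 1) → Fin K, ⨅ j, lam ((f j : ℕ) + 2)
      = ∑ x : Fin K × (Fin M → Fin K),
          ⨅ j, lam (((Fin.consEquiv (fun _ : Fin (M + 1) => Fin K)) x j : ℕ) + 2) :=
    (Fintype.sum_equiv (Fin.consEquiv (fun _ : Fin (M + 1) => Fin K)) _ _ (fun x => rfl)).symm
  have step1 : ∑ x : Fin K × (Fin M → Fin K),
        ⨅ j, lam (((Fin.consEquiv (fun _ : Fin (M + 1) => Fin K)) x j : ℕ) + 2)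
      ≤ ∑ x : Fin K × (Fin M → Fin K),
          (if ∃ i, x.2 i = 0 then lam 2 else lam ((x.1 : ℕ) + 2)) := by
    refine Finset.sum_le_sum fun x _ => ?_
    obtain ⟨a, g⟩ := x
    by_cases hPg : ∃ i, g i = 0
    · obtain ⟨i, hi⟩ := hPg
      have h1 : (⨅ j, lam (((Fin.consEquiv (fun _ : Fin (M + 1) => Fin K)) (a, g) j : ℕ) + 2)) ≤
          lam (((Fin.consEquiv (fun _ : Fin (M + 1) => Fin K)) (a, g) i.succ : ℕ) + 2) :=
        ciInf_le (Set.finite_range _).bddBelow _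
      simp only [Fin.consEquiv_apply, Fin.cons_succ, hi] at h1
      rw [if_pos ⟨i, hi⟩]
      simpa using h1
    · have h1 : (⨅ j, lam (((Fin.consEquiv (fun _ : Fin (M + 1) => Fin K)) (a, g) j : ℕ) + 2)) ≤
          lam (((Fin.consEquiv (fun _ : Fin (M + 1) => Fin K)) (a, g) 0 : ℕ) + 2) :=
        ciInf_le (Set.finite_range _).bddBelow _
      simp only [Fin.consEquiv_apply, Fin.cons_zero] at h1
      rw [if_neg hPg]
      exact h1
  have step2 : ∑ x : Fin K × (Fin M → Fin K),
        (if ∃ i, x.2 i = 0 then lam 2 else lam ((x.1 : ℕ) + 2))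
      = ∑ g : Fin M → Fin K,
          (if ∃ i, g i = 0 then (K : ℝ) * lam 2 else ∑ a : Fin K, lam ((a : ℕ) + 2)) := by
    rw [Fintype.sum_prod_type, Finset.sum_comm]
    refine Finset.sum_congr rfl fun g _ => ?_
    by_cases hPg : ∃ i, g i = 0
    · simp [hPg, Finset.sum_const, card_univ, mul_comm, nsmul_eq_mul]
    · simp [hPg]
  have hW : (Finset.univ.filter (fun g : Fin M → Fin K => ¬ ∃ i, g i = 0)).card = (K - 1) ^ M := by
    rw [← count_nozero (K := K) (M := M)]
    congr 1
    ext g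
    simp [not_exists]
  have hZW : (Finset.univ.filter (fun g : Fin M → Fin K => ∃ i, g i = 0)).card + (K - 1) ^ M
      = K ^ M := by
    rw [← hW, Finset.card_filter_add_card_filter_not]
    simp [Fintype.card_fun]
  have step3 : ∑ g : Fin M → Fin K,
        (if ∃ i, g i = 0 then (K : ℝ) * lam 2 else ∑ a : Fin K, lam ((a : ℕ) + 2))
      = ((Finset.univ.filter (fun g : Fin M → Fin K => ∃ i, g i = 0)).card : ℝ)
          * ((K : ℝ) * lam 2)
        + (((K - 1) ^ M : ℕ) : ℝ) * ∑ a : Fin K, lam ((a : ℕ) + 2) := by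
    rw [Finset.sum_ite, Finset.sum_const, Finset.sum_const, hW]
    simp [nsmul_eq_mul]
  have hK1 : 1 ≤ K := Nat.one_le_iff_ne_zero.mpr (NeZero.ne K)
  have hcast1 : (((K - 1) ^ M : ℕ) : ℝ) = ((K : ℝ) - 1) ^ M := by
    push_cast [Nat.cast_sub hK1]
    ring
  have hcast2 : ((Finset.univ.filter (fun g : Fin M → Fin K => ∃ i, g i = 0)).card : ℝ)
      = (K : ℝ) ^ M - ((K : ℝ) - 1) ^ M := by
    have h := congrArg (fun t : ℕ => (t : ℝ)) hZW
    push_cast at h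
    rw [← hcast1]
    push_cast
    linarith
  rw [key]
  calc _ ≤ _ := step1
    _ = _ := step2
    _ = _ := step3
    _ = _ := by rw [hcast1, hcast2]

private lemma pointwise {n : ℕ} (hn : 3 ≤ n) (H' : SimpleGraph (Fin n)) (M : ℕ) :
    (((n : ℝ) - 1)⁻¹) ^ (M + 1) *
        ∑ f : Fin (M + 1) → Fin (n - 1), ⨅ j, eig (H'.lapMatrix ℝ) ((f j : ℕ) + 2)
      ≤ eig (H'.lapMatrix ℝ) 2 * (1 - (((n : ℝ) - 2) / ((n : ℝ) - 1)) ^ M)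
        + 2 * (H'.edgeFinset.card : ℝ) * ((((n : ℝ) - 2) / ((n : ℝ) - 1)) ^ M) / ((n : ℝ) - 1) := by
  classical
  haveI : NeZero (n - 1) := ⟨by omega⟩
  have hPSD : (H'.lapMatrix ℝ).PosSemidef := posSemidef_lapMatrix ℝ H'
  have hn3 : (3 : ℝ) ≤ (n : ℝ) := by exact_mod_cast hn
  have hc0 : (0 : ℝ) < (n : ℝ) - 1 := by linarith
  have hd0 : (0 : ℝ) < (n : ℝ) - 2 := by linarith
  have hK : ((n - 1 : ℕ) : ℝ) = (n : ℝ) - 1 := by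
    rw [Nat.cast_sub (by omega : 1 ≤ n)]; norm_num
  have key := sum_min_bound (K := n - 1) (M := M) (fun i => eig (H'.lapMatrix ℝ) i)
  simp only [hK] at key
  have hdd : ((n : ℝ) - 1) - 1 = (n : ℝ) - 2 := by ring
  rw [hdd] at key
  have hT : ∑ a : Fin (n - 1), eig (H'.lapMatrix ℝ) ((a : ℕ) + 2)
      ≤ 2 * (H'.edgeFinset.card : ℝ) := by
    rw [← lap_trace H']
    exact sum_eig_le hPSD hn
  set c : ℝ := (n : ℝ) - 1
  set d : ℝ := (n : ℝ) - 2
  set lam2 : ℝ := eig (H'.lapMatrix ℝ) 2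
  set T : ℝ := ∑ a : Fin (n - 1), eig (H'.lapMatrix ℝ) ((a : ℕ) + 2)
  set E : ℝ := (H'.edgeFinset.card : ℝ)
  set S : ℝ := ∑ f : Fin (M + 1) → Fin (n - 1), ⨅ j, eig (H'.lapMatrix ℝ) ((f j : ℕ) + 2)
  have h1 : S ≤ (c ^ M - d ^ M) * (c * lam2) + d ^ M * T := key
  have h2 : (c ^ M - d ^ M) * (c * lam2) + d ^ M * T
      ≤ (c ^ M - d ^ M) * (c * lam2) + d ^ M * (2 * E) := by
    have := mul_le_mul_of_nonneg_left hT (by positivity : (0:ℝ) ≤ d ^ M)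
    linarith
  have h3 : c⁻¹ ^ (M + 1) * S ≤ c⁻¹ ^ (M + 1) * ((c ^ M - d ^ M) * (c * lam2) + d ^ M * (2 * E)) :=
    mul_le_mul_of_nonneg_left (h1.trans h2) (by positivity)
  have h4 : c⁻¹ ^ (M + 1) * ((c ^ M - d ^ M) * (c * lam2) + d ^ M * (2 * E))
      = lam2 * (1 - (d / c) ^ M) + 2 * E * ((d / c) ^ M) / c := by
    rw [div_pow, inv_pow]
    field_simp [hc0.ne']
    ring
  exact h3.trans_eq h4

/-- Let `ℓ₁,…,ℓ_N` be i.i.d. samples, each (conditionally on the random subgraph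
`H ω` of `G`) uniform over the nontrivial Laplacian eigenvalues `λ₂,…,λ_n`, and let
`ℓ_{1:N}` be their minimum.  Averaging over the `(n-1)^N` equally likely index choices
`f : Fin N → Fin (n-1)` and over `ω`,
`E[ℓ_{1:N}] ≤ E[λ₂](1 - ((n-2)/(n-1))^{N-1}) + (2mp/(n-2))((n-2)/(n-1))^N`. -/
theorem expected_min_sample_upper {Ω : Type*} [Fintype Ω] [MeasurableSpace Ω]
    [MeasurableSingletonClass Ω] (μ : Measure Ω) [IsProbabilityMeasure μ]
    {n : ℕ} (hn : 3 ≤ n) (G : SimpleGraph (Fin n)) (hG : G.Connected)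
    (p : ℝ) (hp0 : 0 < p) (hp1 : p < 1)
    (H : Ω → SimpleGraph (Fin n)) (hsub : ∀ ω, H ω ≤ G)
    (hedge : ∀ e ∈ G.edgeSet, (μ {ω | e ∈ (H ω).edgeSet}).toReal = p)
    (hind : iIndepSet (fun e : G.edgeSet => {ω | (e : Sym2 (Fin n)) ∈ (H ω).edgeSet}) μ)
    (N : ℕ) (hN : 1 ≤ N) :
    (∫ ω, ((((n : ℝ) - 1)⁻¹) ^ N *
        ∑ f : Fin N → Fin (n - 1), ⨅ j, eig ((H ω).lapMatrix ℝ) ((f j : ℕ) + 2)) ∂μ)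
      ≤ (∫ ω, eig ((H ω).lapMatrix ℝ) 2 ∂μ)
          * (1 - (((n : ℝ) - 2) / ((n : ℝ) - 1)) ^ (N - 1))
        + (2 * (G.edgeFinset.card : ℝ) * p / ((n : ℝ) - 2))
          * (((n : ℝ) - 2) / ((n : ℝ) - 1)) ^ N := by
  classical
  obtain ⟨M, rfl⟩ : ∃ M, N = M + 1 := ⟨N - 1, by omega⟩
  have hM : (M + 1) - 1 = M := by omega
  rw [hM]
  have hn3 : (3 : ℝ) ≤ (n : ℝ) := by exact_mod_cast hn
  have hc0 : (0 : ℝ) < (n : ℝ) - 1 := by linarith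
  have hd0 : (0 : ℝ) < (n : ℝ) - 2 := by linarith
  set r : ℝ := ((n : ℝ) - 2) / ((n : ℝ) - 1) with hr
  -- pointwise bound
  have hpt : ∀ ω, ((((n : ℝ) - 1)⁻¹) ^ (M + 1) *
        ∑ f : Fin (M + 1) → Fin (n - 1), ⨅ j, eig ((H ω).lapMatrix ℝ) ((f j : ℕ) + 2))
      ≤ eig ((H ω).lapMatrix ℝ) 2 * (1 - r ^ M)
        + ((H ω).edgeFinset.card : ℝ) * (2 * r ^ M / ((n : ℝ) - 1)) := fun ω => by
    have := pointwise hn (H ω) M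
    calc _ ≤ _ := this
      _ = _ := by ring
  have hint : ∀ g : Ω → ℝ, Integrable g μ := fun g => Integrable.of_finite
  have step1 : (∫ ω, ((((n : ℝ) - 1)⁻¹) ^ (M + 1) *
        ∑ f : Fin (M + 1) → Fin (n - 1), ⨅ j, eig ((H ω).lapMatrix ℝ) ((f j : ℕ) + 2)) ∂μ)
      ≤ ∫ ω, (eig ((H ω).lapMatrix ℝ) 2 * (1 - r ^ M)
        + ((H ω).edgeFinset.card : ℝ) * (2 * r ^ M / ((n : ℝ) - 1))) ∂μ :=
    integral_mono (hint _) (hint _) hpt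
  -- compute the expected edge count
  have hcard : (∫ ω, (((H ω).edgeFinset.card : ℝ)) ∂μ) = (G.edgeFinset.card : ℝ) * p := by
    have hdecomp : ∀ ω, (((H ω).edgeFinset.card : ℝ))
        = ∑ e ∈ G.edgeFinset, (if e ∈ (H ω).edgeSet then (1 : ℝ) else 0) := by
      intro ω
      rw [Finset.sum_boole]
      congr 1
      congr 1
      ext e
      simp only [Finset.mem_filter, SimpleGraph.mem_edgeFinset]
      constructor
      · intro he
        exact ⟨(H ω).edgeSet_mono (hsub ω) he, he⟩
      · exact fun h => h.2
    simp only [hdecomp]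
    rw [integral_finset_sum _ (fun e _ => hint _)]
    have he : ∀ e ∈ G.edgeFinset,
        (∫ ω, (if e ∈ (H ω).edgeSet then (1 : ℝ) else 0) ∂μ) = p := by
      intro e he
      have hmeas : MeasurableSet {ω | e ∈ (H ω).edgeSet} := (Set.toFinite _).measurableSet
      have : (fun ω => (if e ∈ (H ω).edgeSet then (1 : ℝ) else 0))
          = Set.indicator {ω | e ∈ (H ω).edgeSet} (fun _ => (1 : ℝ)) := by
        ext ω
        by_cases hω : e ∈ (H ω).edgeSet
        · simp [hω, Set.indicator_of_mem, Set.mem_setOf_eq]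
        · simp [hω, Set.indicator_of_notMem, Set.mem_setOf_eq]
      rw [this, integral_indicator_const _ hmeas, measureReal_def, hedge e (SimpleGraph.mem_edgeFinset.mp he)]
      simp
    rw [Finset.sum_congr rfl he, Finset.sum_const, nsmul_eq_mul]
  -- put everything together
  have step2 : ∫ ω, (eig ((H ω).lapMatrix ℝ) 2 * (1 - r ^ M)
        + ((H ω).edgeFinset.card : ℝ) * (2 * r ^ M / ((n : ℝ) - 1))) ∂μ
      = (∫ ω, eig ((H ω).lapMatrix ℝ) 2 ∂μ) * (1 - r ^ M)
        + ((G.edgeFinset.card : ℝ) * p) * (2 * r ^ M / ((n : ℝ) - 1)) := by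
    rw [integral_add (hint _) (hint _), integral_mul_const, integral_mul_const, hcard]
  have step3 : ((G.edgeFinset.card : ℝ) * p) * (2 * r ^ M / ((n : ℝ) - 1))
      = (2 * (G.edgeFinset.card : ℝ) * p / ((n : ℝ) - 2)) * r ^ (M + 1) := by
    rw [hr, pow_succ, div_pow]
    field_simp
  calc _ ≤ _ := step1
    _ = _ := step2
    _ = _ := by rw [step3]
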